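/- Let f°∈F(λ0) be an equilibrium flow. Then for every non-destination node 0≤v<n, the quantity d_v produced by the backward recursion satisfies d_v ≥ R(f°), the minimal node residual capacity of the network. In particular d_0 ≥ R(f°). -/

import Mathlib

open Filter Set Topology MeasureTheory
open scoped BigOperators ENNReal

noncomputable section

/-- A flow network: a finite directed multigraph on node set `{0, 1, ..., n}`
(origin `0`, destination `n`) in which every link `e` satisfies `σ(e) < τ(e)`. -/
structure FlowNetwork where
  n : ℕ
  npos : 0 < n
  E : Type
  fintE : Fintype E
  decE : DecidableEq E
  /-- the tail node σ(e) -/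
  src : E → Fin (n + 1)
  /-- the head node τ(e) -/
  dst : E → Fin (n + 1)
  src_lt_dst : ∀ e, src e < dst e

attribute [instance] FlowNetwork.fintE FlowNetwork.decE

namespace FlowNetwork

variable (N : FlowNetwork)

def origin : Fin (N.n + 1) := 0

def destination : Fin (N.n + 1) := Fin.last N.n

/-- E⁺_v, the set of outgoing links of a node `v` -/
def outLinks (v : Fin (N.n + 1)) : Finset N.E :=
  Finset.univ.filter fun e => N.src e = v

/-- E⁻_v, the set of incoming links of a node `v` -/
def inLinks (v : Fin (N.n + 1)) : Finset N.E :=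
  Finset.univ.filter fun e => N.dst e = v

/-- `IsWalk p u w` : the list of links `p` forms a path leading from node `u` to node `w`. -/
def IsWalk : List N.E → Fin (N.n + 1) → Fin (N.n + 1) → Prop
  | [], u, w => u = w
  | e :: p, u, w => N.src e = u ∧ IsWalk p (N.dst e) w

/-- every node lies on a path from the origin to the destination -/
def Connected : Prop :=
  ∀ v, (∃ p, N.IsWalk p N.origin v) ∧ ∃ p, N.IsWalk p v N.destination

/-- tree-like topology: the only node reachable from the origin by two distinct paths
is the destination -/
def TreeLike : Prop :=
  ∀ v p q, N.IsWalk p N.origin v → N.IsWalk q N.origin v → p ≠ q → v = N.destination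

/-- `f ∈ F(λ0)`: the set of equilibrium flows for inflow `λ0`. -/
def IsEquilibriumFlow (fmax : N.E → ℝ) (lam0 : ℝ) (f : N.E → ℝ) : Prop :=
  (∀ e, f e ∈ Icc 0 (fmax e)) ∧
  (∑ e ∈ N.outLinks N.origin, f e = lam0) ∧
  ∀ v, v ≠ N.origin → v ≠ N.destination →
    ∑ e ∈ N.outLinks v, f e = ∑ e ∈ N.inLinks v, f e

/-- an origin-destination cut -/
def IsCut (U : Finset (Fin (N.n + 1))) : Prop := N.origin ∈ U ∧ N.destination ∉ U

/-- E⁺_U, the links with tail in `U` and head outside `U` -/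
def cutOutLinks (U : Finset (Fin (N.n + 1))) : Finset N.E :=
  Finset.univ.filter fun e => N.src e ∈ U ∧ N.dst e ∉ U

/-- E⁻_U, the links with tail outside `U` and head in `U` -/
def cutInLinks (U : Finset (Fin (N.n + 1))) : Finset N.E :=
  Finset.univ.filter fun e => N.src e ∉ U ∧ N.dst e ∈ U

/-- the capacity C(U) of a cut -/
def cutCapacity (fmax : N.E → ℝ) (U : Finset (Fin (N.n + 1))) : ℝ :=
  ∑ e ∈ N.cutOutLinks U, fmax e

/-- the min-cut capacity C of the network -/
def minCutCapacity (fmax : N.E → ℝ) : ℝ :=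
  sInf {c | ∃ U, N.IsCut U ∧ c = N.cutCapacity fmax U}

/-- the residual capacity R_v(f) of a node `v` -/
def residualCapacity (fmax f : N.E → ℝ) (v : Fin (N.n + 1)) : ℝ :=
  ∑ e ∈ N.outLinks v, (fmax e - f e)

/-- the minimal node residual capacity R(f) of the network -/
def minResidualCapacity (fmax f : N.E → ℝ) : ℝ :=
  sInf {r | ∃ v, v ≠ N.destination ∧ r = N.residualCapacity fmax f v}

/-- the set X_v(λ), viewed as vectors supported on E⁺_v -/
def Xset (fmax : N.E → ℝ) (v : Fin (N.n + 1)) (lam : ℝ) : Set (N.E → ℝ) :=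
  {x | (∀ e ∈ N.outLinks v, x e ∈ Icc 0 (fmax e)) ∧ (∀ e ∉ N.outLinks v, x e = 0) ∧
    ∑ e ∈ N.outLinks v, (fmax e - x e) ≤ lam}

/-- the cost c_v(x) = Σ_{e ∈ E⁺_v} min{x_e, d_{τ(e)}}, valued in `[0,∞]`
(with the convention `min{x, +∞} = x`) -/
def cval (d : Fin (N.n + 1) → ℝ≥0∞) (v : Fin (N.n + 1)) (x : N.E → ℝ) : ℝ≥0∞ :=
  ∑ e ∈ N.outLinks v, min (ENNReal.ofReal (x e)) (d (N.dst e))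

/-- `d` is the backward recursion: `d_n = +∞` and
`d_v = min { c_v(x) : x ∈ X_v(λ°_v) }` for `v < n`, where `λ°_v = Σ_{e ∈ E⁺_v} f°_e`. -/
def IsBackwardRecursion (fmax f : N.E → ℝ) (d : Fin (N.n + 1) → ℝ≥0∞) : Prop :=
  d N.destination = ⊤ ∧
  ∀ v, v ≠ N.destination →
    d v = sInf (N.cval d v '' N.Xset fmax v (∑ e ∈ N.outLinks v, f e))

end FlowNetwork

end


/-- For an equilibrium flow `f° ∈ F(λ0)`, every `d_v` from the backward recursion is
bounded below by the minimal node residual capacity `R(f°)`; in particular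
`d_0 ≥ R(f°)`. -/
theorem d_ge_min_residual (N : FlowNetwork) (hconn : N.Connected)
    (fmax : N.E → ℝ) (hfmax : ∀ e, 0 < fmax e)
    (lam0 : ℝ) (hlam0 : 0 ≤ lam0)
    (f : N.E → ℝ) (hf : N.IsEquilibriumFlow fmax lam0 f)
    (d : Fin (N.n + 1) → ℝ≥0∞) (hd : N.IsBackwardRecursion fmax f d) :
    (∀ v, v ≠ N.destination →
      ENNReal.ofReal (N.minResidualCapacity fmax f) ≤ d v) ∧
    ENNReal.ofReal (N.minResidualCapacity fmax f) ≤ d N.origin := by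
  obtain ⟨hdtop, hdrec⟩ := hd
  set r := N.minResidualCapacity fmax f with hrdef
  have hbdd : BddBelow {c : ℝ | ∃ v, v ≠ N.destination ∧ c = N.residualCapacity fmax f v} := by
    refine ⟨0, ?_⟩
    rintro c ⟨v, -, rfl⟩
    exact Finset.sum_nonneg fun e _ => sub_nonneg.2 (hf.1 e).2
  have hrle : ∀ v, v ≠ N.destination → r ≤ N.residualCapacity fmax f v := fun v hv =>
    csInf_le hbdd ⟨v, hv, rfl⟩
  have hkey : ∀ m : ℕ, ∀ v : Fin (N.n + 1), N.n - v.val < m → v ≠ N.destination →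
      ENNReal.ofReal r ≤ d v := by
    intro m
    induction m with
    | zero => intro v h; omega
    | succ m ih =>
      intro v hm hv
      have hvn : v.val ≠ N.n := fun h => hv (Fin.ext h)
      rw [hdrec v hv]
      refine le_sInf ?_
      rintro y ⟨x, ⟨hx1, hx2, hx3⟩, rfl⟩
      have hsum : N.residualCapacity fmax f v ≤ ∑ e ∈ N.outLinks v, x e := by
        have h1 : ∑ e ∈ N.outLinks v, (fmax e - x e)
            = ∑ e ∈ N.outLinks v, fmax e - ∑ e ∈ N.outLinks v, x e :=
          Finset.sum_sub_distrib _ _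
        have h2 : ∑ e ∈ N.outLinks v, (fmax e - f e)
            = ∑ e ∈ N.outLinks v, fmax e - ∑ e ∈ N.outLinks v, f e :=
          Finset.sum_sub_distrib _ _
        unfold FlowNetwork.residualCapacity
        rw [h2]; rw [h1] at hx3; linarith
      have hR : ENNReal.ofReal r ≤ ENNReal.ofReal (∑ e ∈ N.outLinks v, x e) :=
        ENNReal.ofReal_le_ofReal ((hrle v hv).trans hsum)
      have hd' : ∀ e ∈ N.outLinks v, ENNReal.ofReal r ≤ d (N.dst e) := by
        intro e he
        by_cases hde : N.dst e = N.destination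
        · rw [hde, hdtop]; exact le_top
        · refine ih (N.dst e) ?_ hde
          have hsrc : N.src e = v := by
            simpa [FlowNetwork.outLinks] using he
          have hlt := N.src_lt_dst e
          rw [hsrc] at hlt
          have hlt' : v.val < (N.dst e).val := hlt
          have hle : (N.dst e).val ≤ N.n := Fin.is_le _
          omega
      have step1 : ∑ e ∈ N.outLinks v, min (ENNReal.ofReal (x e)) (ENNReal.ofReal r)
          ≤ N.cval d v x :=
        Finset.sum_le_sum fun e he => min_le_min le_rfl (hd' e he)
      have step2 : ENNReal.ofReal r
          ≤ ∑ e ∈ N.outLinks v, min (ENNReal.ofReal (x e)) (ENNReal.ofReal r) := by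
        by_cases hcase : ∃ e ∈ N.outLinks v, ENNReal.ofReal r ≤ ENNReal.ofReal (x e)
        · obtain ⟨e, he, hge⟩ := hcase
          calc ENNReal.ofReal r = min (ENNReal.ofReal (x e)) (ENNReal.ofReal r) :=
                (min_eq_right hge).symm
            _ ≤ _ := Finset.single_le_sum (f := fun e => min (ENNReal.ofReal (x e))
                (ENNReal.ofReal r)) (fun _ _ => zero_le) he
        · push_neg at hcase
          have heq : ∑ e ∈ N.outLinks v, min (ENNReal.ofReal (x e)) (ENNReal.ofReal r)
              = ∑ e ∈ N.outLinks v, ENNReal.ofReal (x e) :=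
            Finset.sum_congr rfl fun e he => min_eq_left (le_of_lt (hcase e he))
          rw [heq, ← ENNReal.ofReal_sum_of_nonneg (fun e he => (hx1 e he).1)]
          exact hR
      exact step2.trans step1
  have hmain : ∀ v, v ≠ N.destination → ENNReal.ofReal r ≤ d v := fun v hv =>
    hkey (N.n + 1) v (by omega) hv
  refine ⟨hmain, hmain N.origin ?_⟩
  intro h
  have : (N.origin : Fin (N.n + 1)).val = (N.destination).val := congrArg Fin.val h
  simp [FlowNetwork.origin, FlowNetwork.destination, Fin.last] at this
  have := N.npos
  omega
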